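/- For every prime power p^k with p odd, the number of pairs (m₁, m₂) ∈ (ℤ/p^kℤ)² with m₁² = m₂² equals (1 + k − k/p)·p^k, i.e. equals p^k + k(p^k − p^{k−1}). -/

import Mathlib

open Finset

lemma cardAux (n d : ℕ) (hn : n ≠ 0) (hd : d ∣ n) :
    Nat.card {b : ZMod n // d ∣ b.val} = n / d := by
  haveI : NeZero n := ⟨hn⟩
  have hd0 : d ≠ 0 := by rintro rfl; exact hn (zero_dvd_iff.mp hd)
  have e : {b : ZMod n // d ∣ b.val} ≃ Fin (n / d) :=
    { toFun := fun b => ⟨b.1.val / d, Nat.div_lt_div_of_lt_of_dvd hd b.1.val_lt⟩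
      invFun := fun j => ⟨((j.val * d : ℕ) : ZMod n), by
        rw [ZMod.val_cast_of_lt]
        · exact dvd_mul_left d j.val
        · rw [mul_comm]; exact (Nat.lt_div_iff_mul_lt' hd _).mp j.isLt⟩
      left_inv := fun b => by
        ext
        show ((b.1.val / d * d : ℕ) : ZMod n) = b.1
        rw [Nat.div_mul_cancel b.2]
        exact ZMod.natCast_rightInverse b.1
      right_inv := fun j => by
        ext
        show (((j.val * d : ℕ) : ZMod n)).val / d = j.val
        rw [ZMod.val_cast_of_lt, Nat.mul_div_cancel _ (Nat.pos_of_ne_zero hd0)]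
        rw [mul_comm]; exact (Nat.lt_div_iff_mul_lt' hd _).mp j.isLt }
  rw [Nat.card_congr e]
  simp

lemma dvdMulIff (n x y : ℕ) (hn : n ≠ 0) : n ∣ x * y ↔ n / Nat.gcd n x ∣ y := by
  have hg : Nat.gcd n x ≠ 0 := fun h => hn (Nat.eq_zero_of_gcd_eq_zero_left h)
  have hgpos := Nat.pos_of_ne_zero hg
  have hns : Nat.gcd n x * (n / Nat.gcd n x) = n := Nat.mul_div_cancel' (Nat.gcd_dvd_left n x)
  have hxs : Nat.gcd n x * (x / Nat.gcd n x) = x := Nat.mul_div_cancel' (Nat.gcd_dvd_right n x)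
  have hcop : Nat.Coprime (n / Nat.gcd n x) (x / Nat.gcd n x) :=
    Nat.coprime_div_gcd_div_gcd hgpos
  constructor
  · intro h
    have h2 : Nat.gcd n x * (n / Nat.gcd n x) ∣ Nat.gcd n x * (x / Nat.gcd n x * y) := by
      rw [← mul_assoc, hxs, hns]; exact h
    exact hcop.dvd_of_dvd_mul_left ((mul_dvd_mul_iff_left hgpos.ne').mp h2)
  · intro h
    calc n = Nat.gcd n x * (n / Nat.gcd n x) := hns.symm
      _ ∣ x * y := mul_dvd_mul (Nat.gcd_dvd_right n x) h

lemma annCard (n : ℕ) (hn : n ≠ 0) (a : ZMod n) :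
    Nat.card {b : ZMod n // a * b = 0} = Nat.gcd n a.val := by
  haveI : NeZero n := ⟨hn⟩
  have key : ∀ b : ZMod n, (a * b = 0) ↔ (n / Nat.gcd n a.val ∣ b.val) := by
    intro b
    rw [← ZMod.val_eq_zero, ZMod.val_mul, ← Nat.dvd_iff_mod_eq_zero,
      dvdMulIff n a.val b.val hn]
  rw [Nat.card_congr (Equiv.subtypeEquivRight key),
    cardAux n _ hn (Nat.div_dvd_of_dvd (Nat.gcd_dvd_left n a.val)),
    Nat.div_div_self (Nat.gcd_dvd_left n a.val) hn]

lemma filterRangeCard (n d : ℕ) (hn : 0 < n) (hd : d ∣ n) :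
    #{i ∈ range n | d ∣ i} = n / d := by
  have h1 : range n = insert 0 (Ioo 0 n) := by
    rw [Finset.Ioo_insert_left hn, Nat.Ico_zero_eq_range]
  have h2 : Finset.Ioc 0 n = insert n (Ioo 0 n) := by
    rw [Finset.Ioo_insert_right hn]
  have key := Nat.Ioc_filter_dvd_card_eq_div n d
  rw [h2, filter_insert, if_pos hd, card_insert_of_notMem (by simp)] at key
  rw [h1, filter_insert, if_pos (dvd_zero d), card_insert_of_notMem (by simp), key]

lemma sumGcd (n : ℕ) (hn : n ≠ 0) :
    ∑ i ∈ range n, Nat.gcd n i = ∑ d ∈ n.divisors, Nat.totient d * (n / d) := by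
  have step : ∀ i, Nat.gcd n i = ∑ d ∈ n.divisors with d ∣ i, Nat.totient d := by
    intro i
    have hdi : (Nat.gcd n i).divisors = {d ∈ n.divisors | d ∣ i} := by
      ext d
      simp only [Nat.mem_divisors, mem_filter]
      constructor
      · rintro ⟨hd, _⟩
        exact ⟨⟨hd.trans (Nat.gcd_dvd_left n i), hn⟩, hd.trans (Nat.gcd_dvd_right n i)⟩
      · rintro ⟨⟨h1, _⟩, h2⟩
        exact ⟨Nat.dvd_gcd h1 h2, fun h => hn (Nat.eq_zero_of_gcd_eq_zero_left h)⟩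
    rw [← Nat.sum_totient (Nat.gcd n i), hdi]
  calc ∑ i ∈ range n, Nat.gcd n i
      = ∑ i ∈ range n, ∑ d ∈ n.divisors, if d ∣ i then Nat.totient d else 0 := by
        simp_rw [step, sum_filter]
    _ = ∑ d ∈ n.divisors, ∑ i ∈ range n, if d ∣ i then Nat.totient d else 0 := sum_comm
    _ = ∑ d ∈ n.divisors, Nat.totient d * (n / d) := by
        refine sum_congr rfl fun d hd => ?_
        rw [← sum_filter, sum_const, smul_eq_mul,
          filterRangeCard n d (Nat.pos_of_ne_zero hn) (Nat.mem_divisors.mp hd).1, mul_comm]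

theorem card_sq_eq_sq_odd_prime_pow (p k : ℕ) (hp : p.Prime) (hodd : Odd p) (hk : 1 ≤ k) :
    Nat.card {x : ZMod (p ^ k) × ZMod (p ^ k) | x.1 ^ 2 = x.2 ^ 2}
      = p ^ k + k * (p ^ k - p ^ (k - 1)) := by
  set n := p ^ k with hn
  have hn0 : n ≠ 0 := pow_ne_zero _ hp.pos.ne'
  haveI : NeZero n := ⟨hn0⟩
  have h2 : IsUnit (2 : ZMod n) := by
    have hcop : Nat.Coprime 2 n := Nat.Coprime.pow_right k (Nat.coprime_two_left.mpr hodd)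
    have := (ZMod.isUnit_iff_coprime 2 n).mpr hcop
    simpa using this
  obtain ⟨u, hu⟩ := h2
  have hinv : (2 : ZMod n) * (u⁻¹ : (ZMod n)ˣ) = 1 := by
    rw [← hu]; exact_mod_cast u.mul_inv
  have e1 : {x : ZMod n × ZMod n | x.1 ^ 2 = x.2 ^ 2} ≃ {x : ZMod n × ZMod n | x.1 * x.2 = 0} :=
    { toFun := fun x => ⟨(x.1.1 - x.1.2, x.1.1 + x.1.2), by
        have h := x.2
        simp only [Set.mem_setOf_eq] at h ⊢
        linear_combination h⟩
      invFun := fun y => ⟨((y.1.1 + y.1.2) * (u⁻¹ : (ZMod n)ˣ),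
          (y.1.2 - y.1.1) * (u⁻¹ : (ZMod n)ˣ)), by
        have h := y.2
        simp only [Set.mem_setOf_eq] at h ⊢
        linear_combination (4 * ((u⁻¹ : (ZMod n)ˣ) : ZMod n) ^ 2) * h⟩
      left_inv := fun x => Subtype.ext (Prod.ext
        (by show ((x.1.1 - x.1.2) + (x.1.1 + x.1.2)) * (u⁻¹ : (ZMod n)ˣ) = x.1.1
            linear_combination x.1.1 * hinv)
        (by show ((x.1.1 + x.1.2) - (x.1.1 - x.1.2)) * (u⁻¹ : (ZMod n)ˣ) = x.1.2
            linear_combination x.1.2 * hinv))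
      right_inv := fun y => Subtype.ext (Prod.ext
        (by show (y.1.1 + y.1.2) * (u⁻¹ : (ZMod n)ˣ) - (y.1.2 - y.1.1) * (u⁻¹ : (ZMod n)ˣ) = y.1.1
            linear_combination y.1.1 * hinv)
        (by show (y.1.1 + y.1.2) * (u⁻¹ : (ZMod n)ˣ) + (y.1.2 - y.1.1) * (u⁻¹ : (ZMod n)ˣ) = y.1.2
            linear_combination y.1.2 * hinv)) }
  rw [Nat.card_congr e1]
  have e2 : {x : ZMod n × ZMod n | x.1 * x.2 = 0} ≃ Σ a : ZMod n, {b : ZMod n // a * b = 0} :=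
    Equiv.subtypeProdEquivSigmaSubtype (fun (a b : ZMod n) => a * b = 0)
  rw [Nat.card_congr e2, Nat.card_eq_fintype_card, Fintype.card_sigma]
  simp_rw [← Nat.card_eq_fintype_card]
  simp_rw [annCard n hn0]
  have e3 : ∑ a : ZMod n, Nat.gcd n a.val = ∑ i ∈ range n, Nat.gcd n i :=
    Finset.sum_nbij' (i := fun a => a.val) (j := fun i => (i : ZMod n))
      (fun a _ => mem_range.mpr a.val_lt)
      (fun i _ => mem_univ _)
      (fun a _ => ZMod.natCast_rightInverse a)
      (fun i hi => ZMod.val_cast_of_lt (mem_range.mp hi))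
      (fun a _ => rfl)
  rw [e3, sumGcd n hn0]
  have hpow : p ^ (k - 1) * (p - 1) = p ^ k - p ^ (k - 1) := by
    rw [Nat.mul_sub, mul_one, ← pow_succ, Nat.sub_add_cancel hk]
  have hterm : ∀ i ∈ range k, Nat.totient (p ^ (i + 1)) * (n / p ^ (i + 1))
      = p ^ k - p ^ (k - 1) := by
    intro i hi
    have hik : i + 1 ≤ k := mem_range.mp hi
    rw [Nat.totient_prime_pow_succ hp, hn, Nat.pow_div hik hp.pos, ← hpow]
    rw [mul_comm (p ^ i) (p - 1), mul_assoc, ← pow_add,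
      show i + (k - (i + 1)) = k - 1 from by omega, mul_comm]
  rw [hn, Nat.sum_divisors_prime_pow hp, Finset.sum_range_succ']
  rw [Finset.sum_congr rfl hterm]
  simp [Nat.totient_one, mul_comm, add_comm]
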